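/- Let V be a complex vector space with pairwise anticommuting linear operators G_r (r ∈ ℤ + 1/2), i.e. G_r G_s + G_s G_r = 0 for all r, s. Let m ∈ ℤ_{>0} and suppose that for all r, s ∈ ℤ + 1/2 and all v ∈ V one has Σ_{i=0}^{m} (-1)^i (m choose i) G_{r-i} G_{s+i} v = 0. Then for all r, s ∈ ℤ + 1/2 and all v ∈ V one has G_r G_s G_{s+1} G_{s+2} ⋯ G_{s+m} v = 0. -/

import Mathlib

/-- Auxiliary: coercion of a list of naturals to integers is elementwise. -/
lemma stmt5_coe_list : ∀ L : List ℕ, ((L : List ℤ)) = L.map (fun i : ℕ => (i : ℤ)) := by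
  intro L
  induction L with
  | nil => rfl
  | cons c t ih =>
    exact congrArg _ ih

/-- Auxiliary: an anticommuting operator squares to zero (over `ℂ`). -/
lemma stmt5_sq_zero {V : Type} [AddCommGroup V] [Module ℂ V] (G : ℤ → Module.End ℂ V)
    (hGG : ∀ k l : ℤ, G k * G l + G l * G k = 0) (a : ℤ) : G a * G a = 0 := by
  have h2 : (2 : ℂ) • (G a * G a) = 0 := by rw [two_smul]; exact hGG a a
  rcases smul_eq_zero.mp h2 with h' | h'
  · norm_num at h'
  · exact h'

/-- Auxiliary: if `a` occurs in the list `L`, then `G a * ∏ G L = 0`. -/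
lemma stmt5_mem_zero {V : Type} [AddCommGroup V] [Module ℂ V] (G : ℤ → Module.End ℂ V)
    (hGG : ∀ k l : ℤ, G k * G l + G l * G k = 0) :
    ∀ (L : List ℤ) (a : ℤ), a ∈ L → G a * (L.map G).prod = 0 := by
  intro L
  induction L with
  | nil => intro a h; simp at h
  | cons c t ih =>
    intro a h
    simp only [List.map_cons, List.prod_cons, ← mul_assoc]
    rcases List.mem_cons.mp h with h | h
    · subst h
      rw [stmt5_sq_zero G hGG a, zero_mul]
    · have hac : G a * G c = -(G c * G a) := eq_neg_of_add_eq_zero_left (hGG a c)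
      rw [hac, neg_mul, mul_assoc, ih a h, mul_zero, neg_zero]

/-- let `V` be a complex vector space with pairwise anticommuting
operators `G k` (representing `G_{k+1/2}`, `k ∈ ℤ`).  If
`Σ_{i=0}^m (-1)^i (m choose i) G_{r-i} G_{s+i} v = 0` for all `r = k + 1/2`,
`s = l + 1/2 ∈ ℤ + 1/2` and `v ∈ V`, then
`G_r G_s G_{s+1} ⋯ G_{s+m} v = 0` for all `r = k + 1/2`, `s = l + 1/2` and `v`. -/
theorem stmt5 {V : Type} [AddCommGroup V] [Module ℂ V] (G : ℤ → Module.End ℂ V)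
    (hGG : ∀ k l : ℤ, G k * G l + G l * G k = 0) (m : ℕ) (hm : 0 < m)
    (H : ∀ (k l : ℤ) (v : V),
      ∑ i ∈ Finset.range (m + 1),
        ((-1 : ℂ) ^ i * (m.choose i : ℂ)) • ((G (k - i) * G (l + i)) v) = 0) :
    ∀ (k l : ℤ) (v : V),
      (G k * ((List.range (m + 1)).map (fun i => G (l + i))).prod) v = 0 := by
  intro k l v
  rw [stmt5_coe_list, List.map_map]
  -- the integer list of tail indices
  set L : List ℤ := (List.range m).map (fun j : ℕ => (l + (j + 1) : ℤ)) with hLdef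
  -- rewrite the product
  have hsplit : ((List.range (m + 1)).map ((fun i : ℤ => G (l + i)) ∘ (fun i : ℕ => (i : ℤ)))).prod
      = G l * (L.map G).prod := by
    rw [List.range_succ_eq_map, List.map_cons, List.prod_cons, hLdef, List.map_map,
      List.map_map]
    simp only [Function.comp_def, Nat.succ_eq_add_one, Nat.cast_add, Nat.cast_one,
      Nat.cast_zero, Nat.cast_ofNat, add_zero]
  set w : V := ((L.map G).prod) v with hw
  have hgoal : (G k * ((List.range (m + 1)).map ((fun i : ℤ => G (l + i)) ∘ (fun i : ℕ => (i : ℤ)))).prod) v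
      = (G k * G l) w := by
    rw [hsplit, hw]
    simp [Module.End.mul_apply, mul_assoc]
  rw [hgoal]
  -- each term with i ≠ 0 vanishes
  have hterm : ∀ i ∈ Finset.range (m + 1), i ≠ 0 →
      ((-1 : ℂ) ^ i * (m.choose i : ℂ)) • ((G (k - i) * G (l + i)) w) = 0 := by
    intro i hi hi0
    have hiL : (l + (i : ℤ)) ∈ L := by
      rw [hLdef]
      simp only [List.mem_map, List.mem_range]
      refine ⟨i - 1, ?_, ?_⟩
      · have := Finset.mem_range.mp hi; omega
      · omega
    have hz : (G (l + i)) w = 0 := by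
      rw [hw, ← Module.End.mul_apply, stmt5_mem_zero G hGG L _ hiL]
      rfl
    rw [Module.End.mul_apply, hz, map_zero, smul_zero]
  have hsum := H k l w
  rw [Finset.sum_eq_single_of_mem 0 (Finset.mem_range.mpr (Nat.succ_pos m))
    (fun i hi hi0 => hterm i hi hi0)] at hsum
  simpa using hsum
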